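/- Assume q = 0, the support of ν is contained in [0, +∞), ∫_{[1,∞)} y ν(dy) < ∞, and the restriction of ν to (0,1) is absolutely continuous with respect to Lebesgue measure. Assume further there is a function M varying slowly at 0 such that ∫_{(0,x]} y² ν(dy) / (x · M(x)) → 1 as x → 0⁺, and that M(x) → 0 as x → 0⁺ while ∫₀¹ M(x)/x dx = +∞. Then for every constant c > 0 one has limsup_{z→∞} ( ln z − c · J′(z) ) = +∞. -/

import Mathlib

open MeasureTheory

/-- The topological support of a measure on `ℝ`. -/
def measureSupport (ν : Measure ℝ) : Set ℝ :=
  {x : ℝ | ∀ U : Set ℝ, IsOpen U → x ∈ U → ν U ≠ 0}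

/-- The derivative of the Laplace exponent:
`J′(z) = −a + qz + ∫ y (𝟙_{(−1,1)}(y) − e^{−zy}) ν(dy)`. -/
noncomputable def Jprime (ν : Measure ℝ) (a q : ℝ) (z : ℝ) : ℝ :=
  -a + q * z + ∫ y, y * ((Set.Ioo (-1 : ℝ) 1).indicator 1 y - Real.exp (-(z * y))) ∂ν

lemma aux_one_sub_exp_le (u : ℝ) : 1 - Real.exp (-u) ≤ u := by
  have := Real.add_one_le_exp (-u); linarith

set_option maxHeartbeats 1000000 in
/-- The critical case `ρ = 1`: if `ν` has a density near `0`,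
`∫_{(0,x]} y² ν(dy) ∼ x M(x)` as `x → 0⁺` with `M` slowly varying at `0`, `M(x) → 0`
as `x → 0⁺` and `∫₀¹ M(x)/x dx = +∞`, then `limsup_{z→∞} (ln z − c J′(z)) = +∞`
for every `c > 0`. -/
theorem jprime_limsup_top_of_rho_eq_one (ν : Measure ℝ) (a q : ℝ) (hq : 0 ≤ q)
    (hν : ∫⁻ y, ENNReal.ofReal (min (y ^ 2) 1) ∂ν < ⊤)
    (hq0 : q = 0)
    (hsupp : measureSupport ν ⊆ Set.Ici 0)
    (htail : IntegrableOn (fun y => y) (Set.Ici 1) ν)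
    (hac : ν.restrict (Set.Ioo 0 1) ≪ (volume : Measure ℝ))
    (M : ℝ → ℝ) (hMpos : ∀ x : ℝ, 0 < x → 0 < M x)
    (hMslow : ∀ x : ℝ, 0 < x →
      Filter.Tendsto (fun t => M (t * x) / M t) (nhdsWithin 0 (Set.Ioi 0)) (nhds 1))
    (hasymp : Filter.Tendsto
      (fun x => (∫ y in Set.Ioc (0 : ℝ) x, y ^ 2 ∂ν) / (x * M x))
      (nhdsWithin 0 (Set.Ioi 0)) (nhds 1))
    (hM0 : Filter.Tendsto M (nhdsWithin 0 (Set.Ioi 0)) (nhds 0))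
    (hMdiv : ∫⁻ x in Set.Ioc (0 : ℝ) 1, ENNReal.ofReal (M x / x) = ⊤) :
    ∀ c : ℝ, 0 < c →
      Filter.limsup (fun z : ℝ => ((Real.log z - c * Jprime ν a q z : ℝ) : EReal))
        Filter.atTop = ⊤ := by
  intro c hc
  subst hq0
  set G : ℝ → ℝ := fun x => ∫ y in Set.Ioc (0 : ℝ) x, y ^ 2 ∂ν with hGdef
  -- ν gives no mass to the negative half-line
  have hneg : ν (Set.Iio 0) = 0 := by
    have key : ∀ x : Set.Iio (0 : ℝ), ∃ U : Set ℝ, IsOpen U ∧ (x : ℝ) ∈ U ∧ ν U = 0 := by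
      rintro ⟨x, hx⟩
      by_contra h
      push_neg at h
      have hxs : x ∈ measureSupport ν := fun U hU hxU => h U hU hxU
      exact (not_le.2 (Set.mem_Iio.1 hx)) (Set.mem_Ici.1 (hsupp hxs))
    choose U hUo hxU hU0 using key
    obtain ⟨T, hTc, hTU⟩ := TopologicalSpace.isOpen_iUnion_countable U hUo
    have hsub : Set.Iio (0 : ℝ) ⊆ ⋃ i ∈ T, U i := by
      rw [hTU]
      intro x hx
      exact Set.mem_iUnion.2 ⟨⟨x, hx⟩, hxU ⟨x, hx⟩⟩
    exact measure_mono_null hsub ((measure_biUnion_null_iff hTc).2 fun i _ => hU0 i)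
  have hae : ∀ᵐ y ∂ν, 0 ≤ y := by
    rw [MeasureTheory.ae_iff]
    have : {y : ℝ | ¬ 0 ≤ y} = Set.Iio 0 := by ext y; simp [not_le]
    rw [this]; exact hneg
  -- y^2 is ν-integrable on (0,1]
  have hsq : IntegrableOn (fun y : ℝ => y ^ 2) (Set.Ioc 0 1) ν := by
    constructor
    · exact (measurable_id.pow_const 2).aestronglyMeasurable
    · rw [hasFiniteIntegral_iff_ofReal (Filter.Eventually.of_forall fun y => sq_nonneg y)]
      calc ∫⁻ y in Set.Ioc (0 : ℝ) 1, ENNReal.ofReal (y ^ 2) ∂ν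
          = ∫⁻ y, (Set.Ioc (0 : ℝ) 1).indicator (fun y => ENNReal.ofReal (y ^ 2)) y ∂ν :=
            (lintegral_indicator measurableSet_Ioc _).symm
        _ ≤ ∫⁻ y, ENNReal.ofReal (min (y ^ 2) 1) ∂ν := by
            refine lintegral_mono fun y => ?_
            by_cases hy : y ∈ Set.Ioc (0 : ℝ) 1
            · rw [Set.indicator_of_mem hy]
              refine ENNReal.ofReal_le_ofReal (le_min le_rfl ?_)
              nlinarith [hy.1, hy.2]
            · simp [Set.indicator_of_notMem hy]
        _ < ⊤ := hν
  have hG1nonneg : 0 ≤ G 1 := integral_nonneg (fun y => sq_nonneg y)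
  -- the ENNReal version of G
  set Gnn : ℝ → ENNReal := fun x => ∫⁻ y in Set.Ioc (0 : ℝ) x, ENNReal.ofReal (y ^ 2) ∂ν
    with hGLdef
  have hGL_eq : ∀ x : ℝ, x ≤ 1 → Gnn x = ENNReal.ofReal (G x) := by
    intro x hx
    have hint : IntegrableOn (fun y : ℝ => y ^ 2) (Set.Ioc 0 x) ν :=
      hsq.mono_set (Set.Ioc_subset_Ioc_right hx)
    exact (ofReal_integral_eq_lintegral_ofReal hint
      (Filter.Eventually.of_forall fun y => sq_nonneg y)).symm
  -- extract δ from the hypotheses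
  set η : ℝ := Real.log 2 / (8 * c) with hηdef
  have hlog2 : (0 : ℝ) < Real.log 2 := Real.log_pos (by norm_num)
  have hη : 0 < η := div_pos hlog2 (by linarith)
  obtain ⟨δ₁, hδ₁pos, hδ₁⟩ : ∃ δ > (0 : ℝ), ∀ x, 0 < x → x < δ → G x ≤ 2 * (x * M x) := by
    have h2 := hasymp.eventually_lt_const (by norm_num : (1 : ℝ) < 2)
    rw [eventually_nhdsWithin_iff, Metric.eventually_nhds_iff] at h2
    obtain ⟨ε, hε, h⟩ := h2
    refine ⟨ε, hε, fun x hx hxε => ?_⟩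
    have hd : G x / (x * M x) < 2 :=
      h (by simpa [Real.dist_eq, abs_of_pos hx] using hxε) hx
    have hxM : 0 < x * M x := mul_pos hx (hMpos x hx)
    rw [div_lt_iff₀ hxM] at hd
    linarith
  obtain ⟨δ₂, hδ₂pos, hδ₂⟩ : ∃ δ > (0 : ℝ), ∀ x, 0 < x → x < δ → M x < η := by
    have h2 := hM0.eventually_lt_const hη
    rw [eventually_nhdsWithin_iff, Metric.eventually_nhds_iff] at h2
    obtain ⟨ε, hε, h⟩ := h2
    exact ⟨ε, hε, fun x hx hxε =>
      h (by simpa [Real.dist_eq, abs_of_pos hx] using hxε) hx⟩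
  set δ : ℝ := min (min δ₁ δ₂ / 2) 1 with hδdef
  have hδpos : 0 < δ := lt_min (by positivity) one_pos
  have hδ1 : δ ≤ 1 := min_le_right _ _
  have hδlt₁ : ∀ x, 0 < x → x ≤ δ → G x ≤ 2 * (x * M x) := by
    intro x hx hxδ
    refine hδ₁ x hx ?_
    calc x ≤ δ := hxδ
      _ ≤ min δ₁ δ₂ / 2 := min_le_left _ _
      _ < min δ₁ δ₂ := by have := lt_min hδ₁pos hδ₂pos; linarith
      _ ≤ δ₁ := min_le_left _ _
  have hδlt₂ : ∀ x, 0 < x → x ≤ δ → M x < η := by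
    intro x hx hxδ
    refine hδ₂ x hx ?_
    calc x ≤ δ := hxδ
      _ ≤ min δ₁ δ₂ / 2 := min_le_left _ _
      _ < min δ₁ δ₂ := by have := lt_min hδ₁pos hδ₂pos; linarith
      _ ≤ δ₂ := min_le_right _ _
  -- the dyadic step estimate
  have hstep : ∀ x : ℝ, 0 < x → x ≤ δ →
      ∫⁻ y in Set.Ioc (x / 2) x, ENNReal.ofReal y ∂ν ≤ ENNReal.ofReal (4 * η) := by
    intro x hx hxδ
    have h1 : ∫⁻ y in Set.Ioc (x / 2) x, ENNReal.ofReal y ∂ν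
        ≤ ∫⁻ y in Set.Ioc (x / 2) x, ENNReal.ofReal (2 / x) * ENNReal.ofReal (y ^ 2) ∂ν := by
      refine setLIntegral_mono ((ENNReal.measurable_ofReal.comp
        (measurable_id.pow_const 2)).const_mul _) fun y hy => ?_
      rw [← ENNReal.ofReal_mul (by positivity)]
      refine ENNReal.ofReal_le_ofReal ?_
      have hy1 : x / 2 < y := hy.1
      have hy2 : y ≤ x := hy.2
      have hyp : 0 < y := lt_of_le_of_lt (by positivity) hy1
      rw [div_mul_eq_mul_div, le_div_iff₀ hx]
      nlinarith
    have h2 : ∫⁻ y in Set.Ioc (x / 2) x, ENNReal.ofReal (2 / x) * ENNReal.ofReal (y ^ 2) ∂ν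
        = ENNReal.ofReal (2 / x) * ∫⁻ y in Set.Ioc (x / 2) x, ENNReal.ofReal (y ^ 2) ∂ν :=
      lintegral_const_mul _ (ENNReal.measurable_ofReal.comp (measurable_id.pow_const 2))
    have h3 : ∫⁻ y in Set.Ioc (x / 2) x, ENNReal.ofReal (y ^ 2) ∂ν ≤ Gnn x :=
      lintegral_mono_set (Set.Ioc_subset_Ioc_left (by positivity))
    calc ∫⁻ y in Set.Ioc (x / 2) x, ENNReal.ofReal y ∂ν
        ≤ ENNReal.ofReal (2 / x) * Gnn x := by
          refine h1.trans ?_; rw [h2]; exact mul_le_mul_right h3 _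
      _ = ENNReal.ofReal (2 / x) * ENNReal.ofReal (G x) := by rw [hGL_eq x (hxδ.trans hδ1)]
      _ ≤ ENNReal.ofReal (2 / x) * ENNReal.ofReal (2 * (x * M x)) :=
          mul_le_mul_right (ENNReal.ofReal_le_ofReal (hδlt₁ x hx hxδ)) _
      _ = ENNReal.ofReal ((2 / x) * (2 * (x * M x))) :=
          (ENNReal.ofReal_mul (by positivity)).symm
      _ ≤ ENNReal.ofReal (4 * η) := by
          refine ENNReal.ofReal_le_ofReal ?_
          have hMη := hδlt₂ x hx hxδ
          have : (2 / x) * (2 * (x * M x)) = 4 * M x := by field_simp; ring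
          rw [this]; linarith
  -- the dyadic sum estimate
  have hdyadic : ∀ n : ℕ, ∫⁻ y in Set.Ioc (δ / 2 ^ (n + 1)) δ, ENNReal.ofReal y ∂ν
      ≤ ((n : ENNReal) + 1) * ENNReal.ofReal (4 * η) := by
    intro n
    induction n with
    | zero =>
      simpa using hstep δ hδpos le_rfl
    | succ n ih =>
      have hsplit : Set.Ioc (δ / 2 ^ (n + 2)) δ
          = Set.Ioc (δ / 2 ^ (n + 2)) (δ / 2 ^ (n + 1)) ∪ Set.Ioc (δ / 2 ^ (n + 1)) δ := by
        rw [Set.Ioc_union_Ioc_eq_Ioc]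
        · gcongr
          · norm_num
          · omega
        · calc δ / 2 ^ (n + 1) ≤ δ / 1 := by
                gcongr
                exact_mod_cast Nat.one_le_two_pow
            _ = δ := div_one δ
      have heq : δ / 2 ^ (n + 2) = (δ / 2 ^ (n + 1)) / 2 := by
        rw [div_div]; ring_nf
      calc ∫⁻ y in Set.Ioc (δ / 2 ^ (n + 2)) δ, ENNReal.ofReal y ∂ν
          ≤ (∫⁻ y in Set.Ioc (δ / 2 ^ (n + 2)) (δ / 2 ^ (n + 1)), ENNReal.ofReal y ∂ν)
            + ∫⁻ y in Set.Ioc (δ / 2 ^ (n + 1)) δ, ENNReal.ofReal y ∂ν := by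
            rw [hsplit]; exact lintegral_union_le _ _ _
        _ ≤ ENNReal.ofReal (4 * η) + ((n : ENNReal) + 1) * ENNReal.ofReal (4 * η) := by
            refine add_le_add ?_ ih
            rw [heq]
            refine hstep _ (by positivity) ?_
            calc δ / 2 ^ (n + 1) ≤ δ / 1 := by
                  gcongr
                  exact_mod_cast Nat.one_le_two_pow
              _ = δ := div_one δ
        _ = ((n : ENNReal) + 1 + 1) * ENNReal.ofReal (4 * η) := by ring
        _ = (((n + 1 : ℕ) : ENNReal) + 1) * ENNReal.ofReal (4 * η) := by push_cast; ring
  -- the main eventual bound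
  have hmain : ∀ z : ℝ, 1 ≤ z → 1 / δ ≤ z →
      Jprime ν a 0 z ≤ -a + 2 * η + (Real.log z / Real.log 2 + 2) * (4 * η) + G 1 / δ := by
    intro z hz1 hzδ
    have hzpos : 0 < z := lt_of_lt_of_le one_pos hz1
    have hinvz : 0 < 1 / z := by positivity
    have hinvzδ : 1 / z ≤ δ := by
      rw [div_le_iff₀ hzpos]
      calc (1 : ℝ) = δ * (1 / δ) := by field_simp
        _ ≤ δ * z := by exact mul_le_mul_of_nonneg_left hzδ hδpos.le
    set N : ℕ := ⌈Real.logb 2 (δ * z)⌉₊ with hNdef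
    have hδz1 : 1 ≤ δ * z := by
      have h := mul_le_mul_of_nonneg_left hzδ hδpos.le
      rwa [mul_one_div, div_self hδpos.ne'] at h
    have hlogb_nonneg : 0 ≤ Real.logb 2 (δ * z) :=
      Real.logb_nonneg (by norm_num) hδz1
    have hNbound : δ / 2 ^ (N + 1) ≤ 1 / z := by
      have h1 : δ * z ≤ 2 ^ (N + 1 : ℕ) := by
        have h2 : δ * z = (2 : ℝ) ^ Real.logb 2 (δ * z) :=
          (Real.rpow_logb (by norm_num) (by norm_num) (by linarith)).symm
        have h3 : (2 : ℝ) ^ Real.logb 2 (δ * z) ≤ (2 : ℝ) ^ ((N : ℝ) + 1) := by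
          apply Real.rpow_le_rpow_of_exponent_le (by norm_num)
          have := Nat.le_ceil (Real.logb 2 (δ * z))
          push_cast
          linarith
        have h4 : (2 : ℝ) ^ ((N : ℝ) + 1) = (2 : ℝ) ^ (N + 1 : ℕ) := by
          rw [← Real.rpow_natCast 2 (N + 1)]; push_cast; ring_nf
        rw [h2]; rw [h4] at h3; exact h3
      rw [div_le_div_iff₀ (by positivity) hzpos]
      calc δ * z ≤ 2 ^ (N + 1 : ℕ) := h1
        _ = 1 * 2 ^ (N + 1) := (one_mul _).symm
    -- the integrand and its pointwise domination
    set f : ℝ → ℝ := fun y => y * ((Set.Ioo (-1 : ℝ) 1).indicator 1 y - Real.exp (-(z * y)))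
      with hfdef
    set g : ℝ → ℝ := fun y => (Set.Ioc (0 : ℝ) 1).indicator (fun y => y * min (z * y) 1) y
      with hgdef
    have hgnonneg : ∀ y, 0 ≤ g y := by
      intro y
      simp only [hgdef]
      by_cases hy : y ∈ Set.Ioc (0 : ℝ) 1
      · rw [Set.indicator_of_mem hy]
        have h1 : (0:ℝ) ≤ min (z * y) 1 := le_min (mul_nonneg hzpos.le hy.1.le) zero_le_one
        exact mul_nonneg hy.1.le h1
      · rw [Set.indicator_of_notMem hy]
    have hfg : ∀ y : ℝ, 0 ≤ y → f y ≤ g y := by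
      intro y hy
      rcases eq_or_lt_of_le hy with h0 | h0
      · simp [hfdef, hgdef, ← h0]
      by_cases hy1 : y ≤ 1
      · have hmem : y ∈ Set.Ioc (0 : ℝ) 1 := ⟨h0, hy1⟩
        simp only [hgdef]
        simp only [Set.indicator_of_mem hmem]
        rcases lt_or_eq_of_le hy1 with hlt | heq
        · have hmem' : y ∈ Set.Ioo (-1 : ℝ) 1 := ⟨by linarith, hlt⟩
          simp only [hfdef]
          simp only [Set.indicator_of_mem hmem', Pi.one_apply]
          have hb1 : 1 - Real.exp (-(z * y)) ≤ z * y := aux_one_sub_exp_le (z * y)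
          have hb2 : 1 - Real.exp (-(z * y)) ≤ 1 := by
            have := Real.exp_pos (-(z * y)); linarith
          exact mul_le_mul_of_nonneg_left (le_min hb1 hb2) hy
        · have hmem' : y ∉ Set.Ioo (-1 : ℝ) 1 := by rw [← heq]; simp
          simp only [hfdef]
          simp only [Set.indicator_of_notMem hmem']
          have : y * (0 - Real.exp (-(z * y))) ≤ 0 := by
            have := Real.exp_pos (-(z * y)); nlinarith
          refine this.trans ?_
          have h1 : (0:ℝ) ≤ min (z * y) 1 :=
            le_min (mul_nonneg hzpos.le hy) zero_le_one
          exact mul_nonneg hy h1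
      · have hmem : y ∉ Set.Ioc (0 : ℝ) 1 := fun h => hy1 h.2
        have hmem' : y ∉ Set.Ioo (-1 : ℝ) 1 := fun h => hy1 h.2.le
        simp only [hfdef, hgdef]
        simp only [Set.indicator_of_notMem hmem, Set.indicator_of_notMem hmem']
        have := Real.exp_pos (-(z * y)); nlinarith
    -- integrability of f
    have hmeasf : Measurable f := by
      apply measurable_id.mul
      exact ((measurable_const.indicator measurableSet_Ioo).sub
        (((measurable_const.mul measurable_id).neg).exp))
    have hbound_int : Integrable (fun y =>
        (Set.Ioc (0 : ℝ) 1).indicator (fun y => z * y ^ 2) y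
        + (Set.Ioi (1 : ℝ)).indicator (fun y => y) y) ν := by
      apply Integrable.add
      · exact MeasureTheory.IntegrableOn.integrable_indicator (hsq.const_mul z) measurableSet_Ioc
      · exact MeasureTheory.IntegrableOn.integrable_indicator (htail.mono_set Set.Ioi_subset_Ici_self) measurableSet_Ioi
    have hintf : Integrable f ν := by
      refine Integrable.mono' hbound_int hmeasf.aestronglyMeasurable ?_
      filter_upwards [hae] with y hy
      rcases eq_or_lt_of_le hy with h0 | h0
      · simp [hfdef, ← h0, Set.indicator_of_notMem (by norm_num : (0:ℝ) ∉ Set.Ioc (0:ℝ) 1),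
          Set.indicator_of_notMem (by norm_num : (0:ℝ) ∉ Set.Ioi (1:ℝ))]
      by_cases hy1 : y ≤ 1
      · have hmem : y ∈ Set.Ioc (0 : ℝ) 1 := ⟨h0, hy1⟩
        have hmem2 : y ∉ Set.Ioi (1 : ℝ) := by simp [hy1]
        rw [Set.indicator_of_mem hmem, Set.indicator_of_notMem hmem2, add_zero]
        have hzy : 0 ≤ z * y := by positivity
        have hexp : Real.exp (-(z * y)) ≤ 1 := Real.exp_le_one_iff.2 (by linarith)
        have hexp0 := Real.exp_pos (-(z * y))
        rcases lt_or_eq_of_le hy1 with hlt | heq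
        · have hmem' : y ∈ Set.Ioo (-1 : ℝ) 1 := ⟨by linarith, hlt⟩
          simp only [hfdef]
          simp only [Set.indicator_of_mem hmem', Pi.one_apply]
          rw [Real.norm_eq_abs, abs_mul, abs_of_pos h0, abs_of_nonneg (by linarith)]
          have hb1 : 1 - Real.exp (-(z * y)) ≤ z * y := aux_one_sub_exp_le (z * y)
          nlinarith
        · have hmem' : y ∉ Set.Ioo (-1 : ℝ) 1 := by rw [← heq]; simp
          simp only [hfdef]
          simp only [Set.indicator_of_notMem hmem']
          rw [Real.norm_eq_abs, abs_mul, abs_of_pos h0]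
          have : |0 - Real.exp (-(z * y))| = Real.exp (-(z * y)) := by
            rw [zero_sub, abs_neg, abs_of_pos hexp0]
          rw [this]
          nlinarith
      · push_neg at hy1
        have hmem : y ∉ Set.Ioc (0 : ℝ) 1 := fun h => absurd h.2 (not_le.2 hy1)
        have hmem2 : y ∈ Set.Ioi (1 : ℝ) := hy1
        have hmem' : y ∉ Set.Ioo (-1 : ℝ) 1 := fun h => absurd h.2 (not_lt.2 hy1.le)
        rw [Set.indicator_of_mem hmem2, Set.indicator_of_notMem hmem, zero_add]
        simp only [hfdef]
        simp only [Set.indicator_of_notMem hmem']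
        have hzy : 0 ≤ z * y := by positivity
        have hexp : Real.exp (-(z * y)) ≤ 1 := Real.exp_le_one_iff.2 (by linarith)
        have hexp0 := Real.exp_pos (-(z * y))
        rw [Real.norm_eq_abs, abs_mul, abs_of_pos (by linarith : (0:ℝ) < y)]
        have : |0 - Real.exp (-(z * y))| = Real.exp (-(z * y)) := by
          rw [zero_sub, abs_neg, abs_of_pos hexp0]
        rw [this]
        nlinarith
    -- integrability of g
    have hmeasg : Measurable g := by
      apply Measurable.indicator _ measurableSet_Ioc
      exact measurable_id.mul ((measurable_const.mul measurable_id).min measurable_const)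
    have hintg : Integrable g ν := by
      refine Integrable.mono'
        (MeasureTheory.IntegrableOn.integrable_indicator (hsq.const_mul z) measurableSet_Ioc)
        hmeasg.aestronglyMeasurable (Filter.Eventually.of_forall fun y => ?_)
      rw [Real.norm_eq_abs, abs_of_nonneg (hgnonneg y), hgdef]
      by_cases hy : y ∈ Set.Ioc (0 : ℝ) 1
      · simp only [Set.indicator_of_mem hy]
        have h1 : min (z * y) 1 ≤ z * y := min_le_left _ _
        have h2 : (0:ℝ) ≤ y := hy.1.le
        nlinarith [hy.1]
      · simp [Set.indicator_of_notMem hy]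
    -- the comparison of integrals
    have hcomp : ∫ y, f y ∂ν ≤ ∫ y, g y ∂ν := by
      refine integral_mono_ae hintf hintg ?_
      filter_upwards [hae] with y hy using hfg y hy
    -- lintegral bound for g
    have hgl : ∫ y, g y ∂ν = (∫⁻ y, ENNReal.ofReal (g y) ∂ν).toReal :=
      integral_eq_lintegral_of_nonneg_ae (Filter.Eventually.of_forall hgnonneg)
        hmeasg.aestronglyMeasurable
    -- pointwise bound for ofReal ∘ g
    have hpt : ∀ y : ℝ, ENNReal.ofReal (g y)
        ≤ (Set.Ioc (0 : ℝ) (1 / z)).indicator (fun y => ENNReal.ofReal (z * y ^ 2)) y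
          + (Set.Ioc (1 / z) δ).indicator (fun y => ENNReal.ofReal y) y
          + (Set.Ioc δ 1).indicator (fun y => ENNReal.ofReal (y ^ 2 / δ)) y := by
      intro y
      by_cases hy : y ∈ Set.Ioc (0 : ℝ) 1
      · simp only [hgdef]
        simp only [Set.indicator_of_mem hy]
        by_cases h1 : y ≤ 1 / z
        · have hmem : y ∈ Set.Ioc (0 : ℝ) (1 / z) := ⟨hy.1, h1⟩
          calc ENNReal.ofReal (y * min (z * y) 1)
              ≤ (Set.Ioc (0 : ℝ) (1 / z)).indicator
                  (fun y => ENNReal.ofReal (z * y ^ 2)) y := by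
                rw [Set.indicator_of_mem hmem]
                refine ENNReal.ofReal_le_ofReal ?_
                have h3 := min_le_left (z * y) 1
                nlinarith [mul_le_mul_of_nonneg_left h3 hy.1.le, hy.1]
            _ ≤ _ := le_add_of_le_of_nonneg
                (le_add_of_le_of_nonneg le_rfl zero_le) zero_le
        · push_neg at h1
          by_cases h2 : y ≤ δ
          · have hmem : y ∈ Set.Ioc (1 / z) δ := ⟨h1, h2⟩
            calc ENNReal.ofReal (y * min (z * y) 1)
                ≤ (Set.Ioc (1 / z) δ).indicator (fun y => ENNReal.ofReal y) y := by
                  rw [Set.indicator_of_mem hmem]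
                  refine ENNReal.ofReal_le_ofReal ?_
                  have := min_le_right (z * y) 1
                  nlinarith [hy.1]
              _ ≤ _ := le_add_of_le_of_nonneg (le_add_of_nonneg_of_le zero_le le_rfl)
                  zero_le
          · push_neg at h2
            have hmem : y ∈ Set.Ioc δ 1 := ⟨h2, hy.2⟩
            calc ENNReal.ofReal (y * min (z * y) 1)
                ≤ (Set.Ioc δ 1).indicator (fun y => ENNReal.ofReal (y ^ 2 / δ)) y := by
                  rw [Set.indicator_of_mem hmem]
                  refine ENNReal.ofReal_le_ofReal ?_
                  have h3 := min_le_right (z * y) 1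
                  have hy0 : (0:ℝ) < y := lt_trans hδpos h2
                  have h4 : y * δ ≤ y ^ 2 := by nlinarith
                  have h5 : y * min (z * y) 1 ≤ y := by nlinarith
                  rw [le_div_iff₀ hδpos]
                  nlinarith [mul_le_mul_of_nonneg_right h5 hδpos.le]
              _ ≤ _ := le_add_of_nonneg_left zero_le
      · simp only [hgdef, Set.indicator_of_notMem hy]
        simp
    -- the three-term lintegral bound
    have hmeas1 : Measurable (fun y : ℝ =>
        (Set.Ioc (0 : ℝ) (1 / z)).indicator (fun y => ENNReal.ofReal (z * y ^ 2)) y) :=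
      (ENNReal.measurable_ofReal.comp ((measurable_id.pow_const 2).const_mul z)).indicator
        measurableSet_Ioc
    have hmeas2 : Measurable (fun y : ℝ =>
        (Set.Ioc (1 / z) δ).indicator (fun y => ENNReal.ofReal y) y) :=
      (ENNReal.measurable_ofReal.comp measurable_id).indicator measurableSet_Ioc
    have hmeas3 : Measurable (fun y : ℝ =>
        (Set.Ioc δ 1).indicator (fun y => ENNReal.ofReal (y ^ 2 / δ)) y) :=
      (ENNReal.measurable_ofReal.comp ((measurable_id.pow_const 2).div_const δ)).indicator
        measurableSet_Ioc
    have hT1 : ∫⁻ y in Set.Ioc (0 : ℝ) (1 / z), ENNReal.ofReal (z * y ^ 2) ∂ν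
        ≤ ENNReal.ofReal (2 * η) := by
      have hofr : ∀ y : ℝ, ENNReal.ofReal (z * y ^ 2)
          = ENNReal.ofReal z * ENNReal.ofReal (y ^ 2) := fun y => ENNReal.ofReal_mul hzpos.le
      calc ∫⁻ y in Set.Ioc (0 : ℝ) (1 / z), ENNReal.ofReal (z * y ^ 2) ∂ν
          = ENNReal.ofReal z * Gnn (1 / z) := by
            simp_rw [hofr]
            exact lintegral_const_mul _
              (ENNReal.measurable_ofReal.comp (measurable_id.pow_const 2))
        _ = ENNReal.ofReal z * ENNReal.ofReal (G (1 / z)) := by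
            rw [hGL_eq _ (hinvzδ.trans hδ1)]
        _ ≤ ENNReal.ofReal z * ENNReal.ofReal (2 * ((1 / z) * M (1 / z))) :=
            mul_le_mul_right (ENNReal.ofReal_le_ofReal (hδlt₁ _ hinvz hinvzδ)) _
        _ = ENNReal.ofReal (z * (2 * ((1 / z) * M (1 / z)))) :=
            (ENNReal.ofReal_mul hzpos.le).symm
        _ ≤ ENNReal.ofReal (2 * η) := by
            refine ENNReal.ofReal_le_ofReal ?_
            have hMη := hδlt₂ _ hinvz hinvzδ
            have heq2 : z * (2 * ((1 / z) * M (1 / z))) = 2 * M (1 / z) := by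
              field_simp
            rw [heq2]; linarith
    have hT2 : ∫⁻ y in Set.Ioc (1 / z) δ, ENNReal.ofReal y ∂ν
        ≤ ((N : ENNReal) + 1) * ENNReal.ofReal (4 * η) :=
      le_trans (lintegral_mono_set (Set.Ioc_subset_Ioc_left hNbound)) (hdyadic N)
    have hT3 : ∫⁻ y in Set.Ioc δ 1, ENNReal.ofReal (y ^ 2 / δ) ∂ν
        ≤ ENNReal.ofReal (G 1 / δ) := by
      have hofr : ∀ y : ℝ, ENNReal.ofReal (y ^ 2 / δ)
          = ENNReal.ofReal (1 / δ) * ENNReal.ofReal (y ^ 2) := by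
        intro y
        rw [← ENNReal.ofReal_mul (by positivity)]
        ring_nf
      calc ∫⁻ y in Set.Ioc δ 1, ENNReal.ofReal (y ^ 2 / δ) ∂ν
          = ENNReal.ofReal (1 / δ) * ∫⁻ y in Set.Ioc δ 1, ENNReal.ofReal (y ^ 2) ∂ν := by
            simp_rw [hofr]
            exact lintegral_const_mul _
              (ENNReal.measurable_ofReal.comp (measurable_id.pow_const 2))
        _ ≤ ENNReal.ofReal (1 / δ) * Gnn 1 :=
            mul_le_mul_right (lintegral_mono_set (Set.Ioc_subset_Ioc_left hδpos.le)) _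
        _ = ENNReal.ofReal (1 / δ) * ENNReal.ofReal (G 1) := by rw [hGL_eq 1 le_rfl]
        _ = ENNReal.ofReal (G 1 / δ) := by
            rw [← ENNReal.ofReal_mul (by positivity)]
            ring_nf
    have hcast : ENNReal.ofReal (((N : ℝ) + 1) * (4 * η))
        = ((N : ENNReal) + 1) * ENNReal.ofReal (4 * η) := by
      rw [ENNReal.ofReal_mul (by positivity)]
      congr 1
      rw [ENNReal.ofReal_add (Nat.cast_nonneg N) zero_le_one, ENNReal.ofReal_natCast,
        ENNReal.ofReal_one]
    have hT : ∫⁻ y, ENNReal.ofReal (g y) ∂ν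
        ≤ ENNReal.ofReal (2 * η + ((N : ℝ) + 1) * (4 * η) + G 1 / δ) := by
      calc ∫⁻ y, ENNReal.ofReal (g y) ∂ν
          ≤ ∫⁻ y, ((Set.Ioc (0 : ℝ) (1 / z)).indicator (fun y => ENNReal.ofReal (z * y ^ 2)) y
              + (Set.Ioc (1 / z) δ).indicator (fun y => ENNReal.ofReal y) y
              + (Set.Ioc δ 1).indicator (fun y => ENNReal.ofReal (y ^ 2 / δ)) y) ∂ν :=
            lintegral_mono hpt
        _ = (∫⁻ y, (Set.Ioc (0 : ℝ) (1 / z)).indicator (fun y => ENNReal.ofReal (z * y ^ 2)) y ∂ν)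
            + (∫⁻ y, (Set.Ioc (1 / z) δ).indicator (fun y => ENNReal.ofReal y) y ∂ν)
            + ∫⁻ y, (Set.Ioc δ 1).indicator (fun y => ENNReal.ofReal (y ^ 2 / δ)) y ∂ν := by
            rw [lintegral_add_right _ hmeas3, lintegral_add_right _ hmeas2]
        _ = (∫⁻ y in Set.Ioc (0 : ℝ) (1 / z), ENNReal.ofReal (z * y ^ 2) ∂ν)
            + (∫⁻ y in Set.Ioc (1 / z) δ, ENNReal.ofReal y ∂ν)
            + ∫⁻ y in Set.Ioc δ 1, ENNReal.ofReal (y ^ 2 / δ) ∂ν := by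
            rw [lintegral_indicator measurableSet_Ioc, lintegral_indicator measurableSet_Ioc,
              lintegral_indicator measurableSet_Ioc]
        _ ≤ ENNReal.ofReal (2 * η) + ((N : ENNReal) + 1) * ENNReal.ofReal (4 * η)
            + ENNReal.ofReal (G 1 / δ) := add_le_add (add_le_add hT1 hT2) hT3
        _ = ENNReal.ofReal (2 * η + ((N : ℝ) + 1) * (4 * η) + G 1 / δ) := by
            rw [ENNReal.ofReal_add (by positivity) (by positivity),
              ENNReal.ofReal_add (by positivity) (by positivity), hcast]
    have hgle : ∫ y, g y ∂ν ≤ 2 * η + ((N : ℝ) + 1) * (4 * η) + G 1 / δ := by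
      rw [hgl]
      calc (∫⁻ y, ENNReal.ofReal (g y) ∂ν).toReal
          ≤ (ENNReal.ofReal (2 * η + ((N : ℝ) + 1) * (4 * η) + G 1 / δ)).toReal :=
            ENNReal.toReal_mono ENNReal.ofReal_ne_top hT
        _ = _ := ENNReal.toReal_ofReal (by positivity)
    have hNle : (N : ℝ) + 1 ≤ Real.log z / Real.log 2 + 2 := by
      have h1 : (N : ℝ) < Real.logb 2 (δ * z) + 1 := Nat.ceil_lt_add_one hlogb_nonneg
      have h2 : Real.logb 2 (δ * z) ≤ Real.logb 2 z := by
        apply Real.logb_le_logb_of_le (by norm_num : (1:ℝ) < 2) (by linarith : (0:ℝ) < δ * z)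
        nlinarith
      have h3 : Real.logb 2 z = Real.log z / Real.log 2 := rfl
      linarith [h2, h1, h3.le, h3.ge]
    have hJle : Jprime ν a 0 z = -a + ∫ y, f y ∂ν := by
      simp only [Jprime, zero_mul, add_zero]; rfl
    have hfin : ∫ y, f y ∂ν ≤ 2 * η + ((N : ℝ) + 1) * (4 * η) + G 1 / δ :=
      hcomp.trans hgle
    have hmul : ((N : ℝ) + 1) * (4 * η) ≤ (Real.log z / Real.log 2 + 2) * (4 * η) :=
      mul_le_mul_of_nonneg_right hNle (by positivity)
    rw [hJle]
    linarith
  -- final assembly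
  set K : ℝ := c * (-a + 2 * η + G 1 / δ) + c * (2 * (4 * η)) with hKdef
  have hbig : ∀ᶠ z in Filter.atTop,
      (1 / 2) * Real.log z - K ≤ Real.log z - c * Jprime ν a 0 z := by
    filter_upwards [Filter.eventually_ge_atTop (1 : ℝ),
      Filter.eventually_ge_atTop (1 / δ)] with z hz1 hzδ
    have h := hmain z hz1 hzδ
    have hlogz : 0 ≤ Real.log z := Real.log_nonneg hz1
    have h3 := mul_le_mul_of_nonneg_left h hc.le
    have hexp : c * (-a + 2 * η + (Real.log z / Real.log 2 + 2) * (4 * η) + G 1 / δ)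
        = c * (-a + 2 * η + G 1 / δ) + c * ((Real.log z / Real.log 2 + 2) * (4 * η)) := by
      ring
    have hkey : c * ((Real.log z / Real.log 2 + 2) * (4 * η))
        = (1 / 2) * Real.log z + c * (2 * (4 * η)) := by
      rw [hηdef]
      field_simp
      ring
    rw [hexp, hkey] at h3
    linarith
  have htend : Filter.Tendsto (fun z : ℝ => Real.log z - c * Jprime ν a 0 z)
      Filter.atTop Filter.atTop := by
    refine Filter.tendsto_atTop_mono' Filter.atTop hbig ?_
    have h1 : Filter.Tendsto (fun z : ℝ => (1 / 2) * Real.log z)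
        Filter.atTop Filter.atTop :=
      Real.tendsto_log_atTop.const_mul_atTop (by norm_num : (0:ℝ) < 1 / 2)
    simpa [sub_eq_add_neg] using
      Filter.tendsto_atTop_add_const_right Filter.atTop (-K) h1
  have hEtend : Filter.Tendsto
      (fun z : ℝ => ((Real.log z - c * Jprime ν a 0 z : ℝ) : EReal))
      Filter.atTop (nhds ⊤) := by
    rw [EReal.tendsto_nhds_top_iff_real]
    intro x
    filter_upwards [htend.eventually_gt_atTop x] with z hz
    exact_mod_cast hz
  exact hEtend.limsup_eq
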